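/- Let φ̃: [0,∞) → [0,∞) be C¹ on [0,∞) and C² on (0,∞), convex with φ̃(0) = 0, and suppose there is a constant c ≥ 1 such that φ̃'(t)/c ≤ t·φ̃''(t) ≤ c·φ̃'(t) for all t > 0. Then for all z₁, z₂ ∈ ℝ^d with z₂ ≠ 0 there is a constant C depending only on c, p, q such that φ̃''(|z₁|+|z₂|)·|z₁-z₂|² ≤ C·(φ̃(|z₁|) - φ̃(|z₂|) - (φ̃'(|z₂|)/|z₂|)·z₂·(z₁-z₂)), where we additionally assume φ̃' satisfies (inc)_{p-1} and (dec)_{q-1} for some 1 < p ≤ q. -/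

import Mathlib

open Set

set_option maxHeartbeats 1000000 in
/-- Strong monotonicity inequality for Orlicz functions with Uhlenbeck structure. -/
theorem stmt14 (d : ℕ) (p q c : ℝ) (hp : 1 < p) (hpq : p ≤ q) (hc : 1 ≤ c)
    (φ φ' φ'' : ℝ → ℝ)
    (hφ0 : φ 0 = 0)
    (hconv : ConvexOn ℝ (Set.Ici 0) φ)
    (hC1 : ∀ t : ℝ, 0 ≤ t → HasDerivWithinAt φ (φ' t) (Set.Ici 0) t)
    (hcont : ContinuousOn φ' (Set.Ici 0))
    (hC2 : ∀ t : ℝ, 0 < t → HasDerivAt φ' (φ'' t) t)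
    (hcomp : ∀ t : ℝ, 0 < t → φ' t / c ≤ t * φ'' t ∧ t * φ'' t ≤ c * φ' t)
    (hinc : ∀ s t : ℝ, 0 < s → s ≤ t → φ' s / s ^ (p-1) ≤ φ' t / t ^ (p-1))
    (hdec : ∀ s t : ℝ, 0 < s → s ≤ t → φ' t / t ^ (q-1) ≤ φ' s / s ^ (q-1)) :
    ∃ C > (0:ℝ), ∀ z₁ z₂ : EuclideanSpace ℝ (Fin d), z₂ ≠ 0 →
      φ'' (‖z₁‖ + ‖z₂‖) * ‖z₁ - z₂‖ ^ 2 ≤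
        C * (φ ‖z₁‖ - φ ‖z₂‖ -
          (φ' ‖z₂‖ / ‖z₂‖) * (inner ℝ z₂ (z₁ - z₂) : ℝ)) := by
  have hq1 : (1:ℝ) < q := lt_of_lt_of_le hp hpq
  have hc0 : (0:ℝ) < c := lt_of_lt_of_le one_pos hc
  have h4q : (0:ℝ) < (4:ℝ) ^ (q-1) := Real.rpow_pos_of_pos (by norm_num) _
  -- monotonicity of φ'
  have hmono : ∀ s t : ℝ, 0 ≤ s → s ≤ t → φ' s ≤ φ' t := by
    intro s t hs hst
    rcases eq_or_lt_of_le hst with rfl | h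
    · exact le_refl _
    · have ht : (0:ℝ) ≤ t := hs.trans hst
      have h1 := hconv.le_slope_of_hasDerivWithinAt (mem_Ici.mpr hs) (mem_Ici.mpr ht) h (hC1 s hs)
      have h2 := hconv.slope_le_of_hasDerivWithinAt (mem_Ici.mpr hs) (mem_Ici.mpr ht) h (hC1 t ht)
      exact h1.trans h2
  -- nonnegativity of φ'
  have hφ'nn : ∀ t : ℝ, 0 < t → 0 ≤ φ' t := by
    intro t ht
    by_contra hneg
    push_neg at hneg
    have ht2 : (0:ℝ) < t/2 := by linarith
    have h2 := hdec (t/2) t ht2 (by linarith)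
    have hp2 : (0:ℝ) < (t/2) ^ (q-1) := Real.rpow_pos_of_pos ht2 _
    have hpt : (0:ℝ) < t ^ (q-1) := Real.rpow_pos_of_pos ht _
    have hm := hmono (t/2) t (le_of_lt ht2) (by linarith)
    rw [div_le_div_iff₀ hpt hp2] at h2
    have hlt : (t/2) ^ (q-1) < t ^ (q-1) :=
      Real.rpow_lt_rpow (le_of_lt ht2) (by linarith) (by linarith)
    nlinarith [mul_le_mul_of_nonneg_right hm (le_of_lt hpt)]
  -- nonnegativity of φ''
  have hφ''nn : ∀ t : ℝ, 0 < t → 0 ≤ φ'' t := by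
    intro t ht
    have h := (hcomp t ht).1
    have h2 : 0 ≤ t * φ'' t := le_trans (div_nonneg (hφ'nn t ht) (le_of_lt hc0)) h
    exact nonneg_of_mul_nonneg_right h2 ht
  -- comparison lemma B1
  have hB1 : ∀ s t : ℝ, 0 < s → s ≤ t → t ≤ 4*s → φ'' t ≤ c * (4:ℝ)^(q-1) * (φ' s / s) := by
    intro s t hs hst h4s
    have ht : (0:ℝ) < t := lt_of_lt_of_le hs hst
    have hps : (0:ℝ) < s ^ (q-1) := Real.rpow_pos_of_pos hs _
    have hpt : (0:ℝ) < t ^ (q-1) := Real.rpow_pos_of_pos ht _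
    have hd := hdec s t hs hst
    rw [div_le_div_iff₀ hpt hps] at hd
    have h1 : t ^ (q-1) ≤ (4:ℝ)^(q-1) * s^(q-1) := by
      have := Real.rpow_le_rpow (le_of_lt ht) h4s (by linarith : (0:ℝ) ≤ q-1)
      rwa [Real.mul_rpow (by norm_num) (le_of_lt hs)] at this
    have hφ's : 0 ≤ φ' s := hφ'nn s hs
    have h2 : φ' t * s^(q-1) ≤ ((4:ℝ)^(q-1) * φ' s) * s^(q-1) := by
      calc φ' t * s^(q-1) ≤ φ' s * t^(q-1) := hd
        _ ≤ φ' s * ((4:ℝ)^(q-1) * s^(q-1)) := mul_le_mul_of_nonneg_left h1 hφ's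
        _ = ((4:ℝ)^(q-1) * φ' s) * s^(q-1) := by ring
    have h3 : φ' t ≤ (4:ℝ)^(q-1) * φ' s := le_of_mul_le_mul_right h2 hps
    have h4 := (hcomp t ht).2
    have h5 : t * φ'' t ≤ c * ((4:ℝ)^(q-1) * φ' s) :=
      le_trans h4 (mul_le_mul_of_nonneg_left h3 (le_of_lt hc0))
    have h6 : s * φ'' t ≤ t * φ'' t := mul_le_mul_of_nonneg_right hst (hφ''nn t ht)
    have h7 : φ'' t * s ≤ (c * (4:ℝ)^(q-1) * φ' s) := by
      calc φ'' t * s = s * φ'' t := by ring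
        _ ≤ c * ((4:ℝ)^(q-1) * φ' s) := le_trans h6 h5
        _ = c * (4:ℝ)^(q-1) * φ' s := by ring
    calc φ'' t = φ'' t * s / s := by field_simp
      _ ≤ (c * (4:ℝ)^(q-1) * φ' s) / s := by gcongr
      _ = c * (4:ℝ)^(q-1) * (φ' s / s) := by ring
  -- comparison lemma B2
  have hB2 : ∀ s t : ℝ, 0 < s → s ≤ t → t ≤ 4*s → φ'' t ≤ c^2 * (4:ℝ)^(q-1) * φ'' s := by
    intro s t hs hst h4s
    have h1 := hB1 s t hs hst h4s
    have h2 : φ' s / s ≤ c * φ'' s := by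
      have h := (hcomp s hs).1
      rw [div_le_iff₀ hc0] at h
      rw [div_le_iff₀ hs]
      nlinarith
    calc φ'' t ≤ c * (4:ℝ)^(q-1) * (φ' s / s) := h1
      _ ≤ c * (4:ℝ)^(q-1) * (c * φ'' s) := mul_le_mul_of_nonneg_left h2 (by positivity)
      _ = c^2 * (4:ℝ)^(q-1) * φ'' s := by ring
  -- continuity of φ, derivative of φ at interior points
  have hφcont : ContinuousOn φ (Set.Ici 0) := fun x hx => (hC1 x hx).continuousWithinAt
  have hφderiv : ∀ x : ℝ, 0 < x → HasDerivAt φ (φ' x) x := fun x hx =>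
    (hC1 x (le_of_lt hx)).hasDerivAt (Ici_mem_nhds hx)
  -- MVT for φ
  have mvtφ : ∀ α β : ℝ, 0 ≤ α → α < β →
      ∃ η ∈ Ioo α β, φ' η = (φ β - φ α) / (β - α) := by
    intro α β hα hαβ
    exact exists_hasDerivAt_eq_slope φ φ' hαβ
      (hφcont.mono (fun x hx => le_trans hα hx.1))
      (fun x hx => hφderiv x (lt_of_le_of_lt hα hx.1))
  -- MVT for φ'
  have mvtφ' : ∀ α β : ℝ, 0 < α → α < β →
      ∃ ξ ∈ Ioo α β, φ'' ξ = (φ' β - φ' α) / (β - α) := by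
    intro α β hα hαβ
    refine exists_hasDerivAt_eq_slope φ' φ'' hαβ ?_ ?_
    · intro x hx
      exact ((hC2 x (lt_of_lt_of_le hα hx.1)).continuousAt).continuousWithinAt
    · exact fun x hx => hC2 x (lt_trans hα hx.1)
  set K : ℝ := c^2 * (4:ℝ)^(q-1) with hK
  have hKpos : 0 < K := by positivity
  -- the key one-dimensional estimate
  have key : ∀ a b : ℝ, 0 ≤ a → 0 < b →
      φ'' (a+b) * (a-b)^2 ≤ 8 * K * (φ a - φ b - φ' b * (a - b)) := by
    intro a b ha hb
    rcases lt_trichotomy a b with hab | hab | hab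
    · -- a < b
      set G : ℝ → ℝ := fun x => φ' b * x - φ x with hG
      have hGd : ∀ x : ℝ, 0 < x → HasDerivAt G (φ' b - φ' x) x := by
        intro x hx
        have h := ((hasDerivAt_id x).const_mul (φ' b)).sub (hφderiv x hx)
        simp only [id_eq, mul_one] at h
        exact h
      have mvtG : ∀ α β : ℝ, 0 ≤ α → α < β →
          ∃ η ∈ Ioo α β, φ' b - φ' η = (G β - G α) / (β - α) := by
        intro α β hα hαβ
        exact exists_hasDerivAt_eq_slope G (fun x => φ' b - φ' x) hαβ
          ((continuousOn_const.mul continuousOn_id).sub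
            (hφcont.mono (fun x hx => le_trans hα hx.1)))
          (fun x hx => hGd x (lt_of_le_of_lt hα hx.1))
      obtain ⟨η, hη, hηe⟩ := mvtG a ((a+b)/2) ha (by linarith)
      obtain ⟨η₂, hη₂, hη₂e⟩ := mvtG ((a+b)/2) b (by linarith) (by linarith)
      obtain ⟨ξ, hξ, hξe⟩ := mvtφ' ((a+b)/2) ((a+3*b)/4) (by linarith) (by linarith)
      obtain ⟨hξ1, hξ2⟩ := hξ
      have hξ0 : 0 < ξ := by linarith
      have hcomp_ξ : φ'' (a+b) ≤ K * φ'' ξ := hB2 ξ (a+b) hξ0 (by linarith) (by linarith)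
      have e1 : G ((a+b)/2) - G a = (φ' b - φ' η) * ((a+b)/2 - a) := by
        rw [hηe]
        exact (div_mul_cancel₀ _ (sub_ne_zero.mpr (ne_of_gt (by linarith : a < (a+b)/2)))).symm
      have e2 : G b - G ((a+b)/2) = (φ' b - φ' η₂) * (b - (a+b)/2) := by
        rw [hη₂e]
        exact (div_mul_cancel₀ _ (sub_ne_zero.mpr (ne_of_gt (by linarith : (a+b)/2 < b)))).symm
      have e3 : φ' ((a+3*b)/4) - φ' ((a+b)/2) = φ'' ξ * ((a+3*b)/4 - (a+b)/2) := by
        rw [hξe]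
        exact (div_mul_cancel₀ _ (sub_ne_zero.mpr (ne_of_gt (by linarith : (a+b)/2 < (a+3*b)/4)))).symm
      obtain ⟨hη1, hη2⟩ := hη
      obtain ⟨hη₂1, hη₂2⟩ := hη₂
      have hmono1 : φ' η ≤ φ' ((a+b)/2) := hmono η _ (by linarith) (by linarith)
      have hmono2 : φ' η₂ ≤ φ' b := hmono η₂ b (by linarith) (by linarith)
      have hmono3 : φ' ((a+3*b)/4) ≤ φ' b := hmono _ b (by linarith) (by linarith)
      have hξnn : 0 ≤ φ'' ξ := hφ''nn ξ hξ0
      have s1 : (φ' b - φ' ((a+b)/2)) * ((a+b)/2 - a) ≤ G ((a+b)/2) - G a := by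
        rw [e1]
        exact mul_le_mul_of_nonneg_right (by linarith) (by linarith)
      have s2 : 0 ≤ G b - G ((a+b)/2) := by
        rw [e2]
        exact mul_nonneg (by linarith) (by linarith)
      have s3 : φ'' ξ * ((b-a)/4) ≤ φ' b - φ' ((a+b)/2) := by
        have h4 : (a+3*b)/4 - (a+b)/2 = (b-a)/4 := by ring
        rw [h4] at e3
        linarith
      have s4 : φ'' ξ * ((b-a)/4) * ((a+b)/2 - a) ≤ (φ' b - φ' ((a+b)/2)) * ((a+b)/2 - a) :=
        mul_le_mul_of_nonneg_right s3 (by linarith)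
      have hGba : G b - G a = φ a - φ b - φ' b * (a - b) := by simp only [hG]; ring
      have hTlow : φ'' ξ * (a-b)^2 / 8 ≤ φ a - φ b - φ' b * (a-b) := by
        rw [← hGba]
        linarith only [s4.trans s1, s2]
      have m1 : φ'' (a+b) * (a-b)^2 ≤ K * φ'' ξ * (a-b)^2 :=
        mul_le_mul_of_nonneg_right hcomp_ξ (sq_nonneg _)
      have m2 : (8*K) * (φ'' ξ * (a-b)^2 / 8) ≤ (8*K) * (φ a - φ b - φ' b * (a-b)) :=
        mul_le_mul_of_nonneg_left hTlow (by positivity)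
      linarith only [m1, m2]
    · rw [hab]; simp
    · -- b < a
      obtain ⟨η, hη, hηe⟩ := mvtφ ((a+b)/2) a (by linarith) (by linarith)
      obtain ⟨η₂, hη₂, hη₂e⟩ := mvtφ b ((a+b)/2) (le_of_lt hb) (by linarith)
      obtain ⟨ξ, hξ, hξe⟩ := mvtφ' ((a+3*b)/4) ((a+b)/2) (by linarith) (by linarith)
      obtain ⟨hξ1, hξ2⟩ := hξ
      have hξ0 : 0 < ξ := by linarith
      have hcomp_ξ : φ'' (a+b) ≤ K * φ'' ξ := hB2 ξ (a+b) hξ0 (by linarith) (by linarith)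
      have e1 : φ a - φ ((a+b)/2) = φ' η * (a - (a+b)/2) := by
        rw [hηe]
        exact (div_mul_cancel₀ _ (sub_ne_zero.mpr (ne_of_gt (by linarith : (a+b)/2 < a)))).symm
      have e2 : φ ((a+b)/2) - φ b = φ' η₂ * ((a+b)/2 - b) := by
        rw [hη₂e]
        exact (div_mul_cancel₀ _ (sub_ne_zero.mpr (ne_of_gt (by linarith : b < (a+b)/2)))).symm
      have e3 : φ' ((a+b)/2) - φ' ((a+3*b)/4) = φ'' ξ * ((a+b)/2 - (a+3*b)/4) := by
        rw [hξe]
        exact (div_mul_cancel₀ _ (sub_ne_zero.mpr (ne_of_gt (by linarith : (a+3*b)/4 < (a+b)/2)))).symm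
      obtain ⟨hη1, hη2⟩ := hη
      obtain ⟨hη₂1, hη₂2⟩ := hη₂
      have hmono1 : φ' ((a+b)/2) ≤ φ' η := hmono _ η (by linarith) (by linarith)
      have hmono2 : φ' b ≤ φ' η₂ := hmono b η₂ (le_of_lt hb) (by linarith)
      have hmono3 : φ' b ≤ φ' ((a+3*b)/4) := hmono b _ (le_of_lt hb) (by linarith)
      have hξnn : 0 ≤ φ'' ξ := hφ''nn ξ hξ0
      have s1 : (φ' ((a+b)/2) - φ' b) * (a - (a+b)/2) ≤
          (φ a - φ ((a+b)/2)) - φ' b * (a - (a+b)/2) := by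
        have h := mul_le_mul_of_nonneg_right (by linarith [hmono1] : φ' ((a+b)/2) - φ' b ≤ φ' η - φ' b)
          (by linarith : (0:ℝ) ≤ a - (a+b)/2)
        linarith only [h, e1]
      have s2 : 0 ≤ (φ ((a+b)/2) - φ b) - φ' b * ((a+b)/2 - b) := by
        have h := mul_le_mul_of_nonneg_right (by linarith [hmono2] : (0:ℝ) ≤ φ' η₂ - φ' b)
          (by linarith : (0:ℝ) ≤ (a+b)/2 - b)
        linarith only [h, e2]
      have s3 : φ'' ξ * ((a-b)/4) ≤ φ' ((a+b)/2) - φ' b := by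
        have h4 : (a+b)/2 - (a+3*b)/4 = (a-b)/4 := by ring
        rw [h4] at e3
        linarith
      have s4 : φ'' ξ * ((a-b)/4) * (a - (a+b)/2) ≤ (φ' ((a+b)/2) - φ' b) * (a - (a+b)/2) :=
        mul_le_mul_of_nonneg_right s3 (by linarith)
      have hTlow : φ'' ξ * (a-b)^2 / 8 ≤ φ a - φ b - φ' b * (a-b) := by
        linarith only [s4.trans s1, s2]
      have m1 : φ'' (a+b) * (a-b)^2 ≤ K * φ'' ξ * (a-b)^2 :=
        mul_le_mul_of_nonneg_right hcomp_ξ (sq_nonneg _)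
      have m2 : (8*K) * (φ'' ξ * (a-b)^2 / 8) ≤ (8*K) * (φ a - φ b - φ' b * (a-b)) :=
        mul_le_mul_of_nonneg_left hTlow (by positivity)
      linarith only [m1, m2]
  -- the main real-variable inequality
  set C : ℝ := 72 * K + 2 * c * (4:ℝ)^(q-1) with hC
  have hCpos : 0 < C := by positivity
  have main : ∀ a b ipr : ℝ, 0 ≤ a → 0 < b → ipr ≤ a*b → -(a*b) ≤ ipr →
      φ'' (a+b) * ((a-b)^2 + 2*(a*b - ipr)) ≤
        C * (φ a - φ b - (φ' b / b) * (ipr - b^2)) := by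
    intro a b ipr ha hb hCS hCS2
    have hTa := key a b ha hb
    have hF : 0 ≤ φ'' (a+b) := hφ''nn (a+b) (by linarith)
    have hφ'b : 0 ≤ φ' b := hφ'nn b hb
    have hTnn : 0 ≤ φ a - φ b - φ' b * (a - b) := by
      have h1 : 0 ≤ 8 * K * (φ a - φ b - φ' b * (a - b)) :=
        le_trans (mul_nonneg hF (sq_nonneg _)) hTa
      exact nonneg_of_mul_nonneg_right h1 (by positivity)
    have hDnn : 0 ≤ a*b - ipr := by linarith
    have hPDnn : 0 ≤ (φ' b / b) * (a*b - ipr) :=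
      mul_nonneg (div_nonneg hφ'b (le_of_lt hb)) hDnn
    have hE : φ a - φ b - (φ' b / b) * (ipr - b^2) =
        (φ a - φ b - φ' b * (a - b)) + (φ' b / b) * (a*b - ipr) := by
      field_simp
      ring
    rw [hE]
    have hKT : 0 ≤ K * (φ a - φ b - φ' b * (a - b)) := mul_nonneg hKpos.le hTnn
    have hc4 : 0 < c * (4:ℝ)^(q-1) := by positivity
    rcases le_or_gt a (2*b) with hcase | hcase
    · -- a ≤ 2b
      have hFb : φ'' (a+b) ≤ c * (4:ℝ)^(q-1) * (φ' b / b) :=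
        hB1 b (a+b) hb (by linarith) (by linarith)
      have h2 : φ'' (a+b) * (a*b - ipr) ≤ (c * (4:ℝ)^(q-1)) * ((φ' b / b) * (a*b - ipr)) := by
        have := mul_le_mul_of_nonneg_right hFb hDnn
        linarith only [this]
      have h3 : 0 ≤ (c * (4:ℝ)^(q-1)) * ((φ' b / b) * (a*b - ipr)) :=
        mul_nonneg hc4.le hPDnn
      have h4 : 0 ≤ K * ((φ' b / b) * (a*b - ipr)) := mul_nonneg hKpos.le hPDnn
      have h5 : 0 ≤ (c * (4:ℝ)^(q-1)) * (φ a - φ b - φ' b * (a - b)) :=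
        mul_nonneg hc4.le hTnn
      simp only [hC]
      linarith only [h2, hTa, hKT, h4, h5]
    · -- a > 2b
      have hD4 : a*b - ipr ≤ 4 * (a-b)^2 := by
        linarith only [hCS2, sq_nonneg (a - 2*b),
          mul_nonneg hb.le (by linarith : (0:ℝ) ≤ a - 2*b)]
      have h2 : φ'' (a+b) * (a*b - ipr) ≤ 4 * (φ'' (a+b) * (a-b)^2) := by
        have := mul_le_mul_of_nonneg_left hD4 hF
        linarith only [this]
      have h4 : 0 ≤ K * ((φ' b / b) * (a*b - ipr)) := mul_nonneg hKpos.le hPDnn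
      have h5 : 0 ≤ (c * (4:ℝ)^(q-1)) * (φ a - φ b - φ' b * (a - b)) :=
        mul_nonneg hc4.le hTnn
      have h6 : 0 ≤ (c * (4:ℝ)^(q-1)) * ((φ' b / b) * (a*b - ipr)) :=
        mul_nonneg hc4.le hPDnn
      simp only [hC]
      linarith only [h2, hTa, hKT, h4, h5, h6]
  refine ⟨C, hCpos, ?_⟩
  intro z₁ z₂ hz₂
  have hb : 0 < ‖z₂‖ := norm_pos_iff.mpr hz₂
  have h1 : ‖z₁ - z₂‖^2 = (‖z₁‖-‖z₂‖)^2 + 2*(‖z₁‖*‖z₂‖ - (inner ℝ z₁ z₂ : ℝ)) := by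
    rw [norm_sub_sq_real]; ring
  have h2 : (inner ℝ z₂ (z₁ - z₂) : ℝ) = (inner ℝ z₁ z₂ : ℝ) - ‖z₂‖^2 := by
    rw [inner_sub_right, real_inner_comm z₂ z₁, real_inner_self_eq_norm_sq]
  have hCS : (inner ℝ z₁ z₂ : ℝ) ≤ ‖z₁‖ * ‖z₂‖ := real_inner_le_norm z₁ z₂
  have hCS2 : -(‖z₁‖ * ‖z₂‖) ≤ (inner ℝ z₁ z₂ : ℝ) := by
    have := abs_real_inner_le_norm z₁ z₂
    rw [abs_le] at this
    exact this.1
  rw [h1, h2]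
  exact main ‖z₁‖ ‖z₂‖ (inner ℝ z₁ z₂ : ℝ) (norm_nonneg _) hb hCS hCS2
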